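/- For every natural number m, sum_{k=0}^m (3k+1)!/(k! * k! * (k+1)!) * 3^(-3k)/(k+2) = ((m+1)/8) * binom(3m+4, m+1) * binom(2m+3, m+1) * 3^(-3m-1), as rational numbers. -/

import Mathlib

/-- Closed form: ∑_{k=0}^m (3k+1)!/(k! k! (k+1)!) 3^(-3k)/(k+2)
  = ((m+1)/8) C(3m+4,m+1) C(2m+3,m+1) 3^(-3m-1). -/
theorem sum_g_closed_binom (m : ℕ) :
    ∑ k ∈ Finset.range (m + 1),
        ((3 * k + 1).factorial : ℚ) /
          ((k.factorial : ℚ) * (k.factorial : ℚ) * ((k + 1).factorial : ℚ)) /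
          (3 : ℚ) ^ (3 * k) / (k + 2) =
      ((m : ℚ) + 1) / 8 * (Nat.choose (3 * m + 4) (m + 1) : ℚ) *
        (Nat.choose (2 * m + 3) (m + 1) : ℚ) / (3 : ℚ) ^ (3 * m + 1) := by
  induction m with
  | zero => norm_num [Nat.factorial]
  | succ n ih =>
    rw [Finset.sum_range_succ, ih]
    have e1 : 3 * (n + 1) + 4 = 3 * n + 7 := by ring
    have e2 : 2 * (n + 1) + 3 = 2 * n + 5 := by ring
    have e3 : 3 * (n + 1) + 1 = 3 * n + 4 := by ring
    have e4 : 3 * (n + 1) = 3 * n + 3 := by ring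
    rw [e1, e2, e3, e4]
    have c1 : ((3 * n + 4).choose (n + 1) : ℚ) =
        ((3 * n + 4).factorial : ℚ) / ((n + 1).factorial * (2 * n + 3).factorial) := by
      rw [Nat.cast_choose ℚ (by omega : n + 1 ≤ 3 * n + 4),
        (by omega : 3 * n + 4 - (n + 1) = 2 * n + 3)]
    have c2 : ((2 * n + 3).choose (n + 1) : ℚ) =
        ((2 * n + 3).factorial : ℚ) / ((n + 1).factorial * (n + 2).factorial) := by
      rw [Nat.cast_choose ℚ (by omega : n + 1 ≤ 2 * n + 3),
        (by omega : 2 * n + 3 - (n + 1) = n + 2)]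
    have c3 : ((3 * n + 7).choose (n + 1 + 1) : ℚ) =
        ((3 * n + 7).factorial : ℚ) / ((n + 2).factorial * (2 * n + 5).factorial) := by
      rw [Nat.cast_choose ℚ (by omega : n + 1 + 1 ≤ 3 * n + 7),
        (by omega : 3 * n + 7 - (n + 1 + 1) = 2 * n + 5)]
    have c4 : ((2 * n + 5).choose (n + 1 + 1) : ℚ) =
        ((2 * n + 5).factorial : ℚ) / ((n + 2).factorial * (n + 3).factorial) := by
      rw [Nat.cast_choose ℚ (by omega : n + 1 + 1 ≤ 2 * n + 5),
        (by omega : 2 * n + 5 - (n + 1 + 1) = n + 3)]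
    rw [c1, c2, c3, c4]
    have f1 : ((3 * n + 7).factorial : ℚ) =
        (3 * n + 7) * (3 * n + 6) * (3 * n + 5) * (3 * n + 4).factorial := by
      have : 3 * n + 7 = (3 * n + 4) + 1 + 1 + 1 := by omega
      rw [this]
      push_cast [Nat.factorial_succ]
      ring
    have f2 : ((2 * n + 5).factorial : ℚ) =
        (2 * n + 5) * (2 * n + 4) * (2 * n + 3).factorial := by
      have : 2 * n + 5 = (2 * n + 3) + 1 + 1 := by omega
      rw [this]
      push_cast [Nat.factorial_succ]
      ring
    have f3 : ((n + 3).factorial : ℚ) = (n + 3) * (n + 2) * (n + 1).factorial := by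
      have : n + 3 = (n + 1) + 1 + 1 := by omega
      rw [this]
      push_cast [Nat.factorial_succ]
      ring
    have f4 : ((n + 2).factorial : ℚ) = (n + 2) * (n + 1).factorial := by
      have : n + 2 = (n + 1) + 1 := by omega
      rw [this]
      push_cast [Nat.factorial_succ]
      ring
    have f6 : ((n + 1).factorial : ℚ) ≠ 0 := by positivity
    have f7 : ((3 * n + 4).factorial : ℚ) ≠ 0 := by positivity
    have f8 : ((2 * n + 3).factorial : ℚ) ≠ 0 := by positivity
    rw [f1, f2, f3, f4]
    have hn : ((n : ℚ) + 1) + 1 = (n : ℚ) + 2 := by ring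
    push_cast
    field_simp
    ring
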